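/- Let Ψ_α(z) = z·max_i α_i − (β/L)·log(1 − q + ∑_{i=1}^q exp(z·α_i·L·φ_i)) where L > 0, 0 < β < 1, φ_i ∈ (0,1] with φ_i ≥ 1−γ for all i, α a probability vector with max_i α_i ≤ α_max < 1, and parameters satisfying ε + α_max ≤ β(1−γ) for some ε > 0. Then Ψ_α(0) = 0 and Ψ_α'(0) ≤ −ε; consequently there exists z₀ > 0, uniform over all such α, with Ψ_α(z) < 0 for all 0 < z < z₀. -/

import Mathlib

open Filter Set

noncomputable section

/-- with `Ψ_α(z) = z·max_i α_i − (β/L)·log(1 − q + ∑_i exp(z α_i L φ_i))`,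
under the stated constraints one has `Ψ_α(0) = 0`, `Ψ_α'(0) ≤ −ε`, and there is a
`z₀ > 0`, uniform over all admissible `α` (and `φ`), with `Ψ_α(z) < 0` for
`0 < z < z₀`. -/
theorem Psi_negative_near_zero (q : ℕ) (hq : 2 ≤ q) (L β γ ε αmax : ℝ)
    (hL : 0 < L) (hβ0 : 0 < β) (hβ1 : β < 1) (hε : 0 < ε) (hαmax : αmax < 1)
    (hcond : ε + αmax ≤ β * (1 - γ)) :
    (∀ α φ : Fin q → ℝ, (∀ i, 0 ≤ α i) → (∑ i, α i) = 1 → (∀ i, α i ≤ αmax) →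
      (∀ i, φ i ∈ Set.Ioc (0:ℝ) 1) → (∀ i, 1 - γ ≤ φ i) →
      (fun zz : ℝ => zz * (⨆ i, α i) -
          (β / L) * Real.log (1 - (q:ℝ) + ∑ i, Real.exp (zz * α i * L * φ i))) 0 = 0 ∧
      deriv (fun zz : ℝ => zz * (⨆ i, α i) -
          (β / L) * Real.log (1 - (q:ℝ) + ∑ i, Real.exp (zz * α i * L * φ i))) 0 ≤ -ε) ∧
    ∃ z₀ > (0:ℝ), ∀ α φ : Fin q → ℝ, (∀ i, 0 ≤ α i) → (∑ i, α i) = 1 →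
      (∀ i, α i ≤ αmax) → (∀ i, φ i ∈ Set.Ioc (0:ℝ) 1) → (∀ i, 1 - γ ≤ φ i) →
      ∀ zz : ℝ, 0 < zz → zz < z₀ →
        zz * (⨆ i, α i) -
          (β / L) * Real.log (1 - (q:ℝ) + ∑ i, Real.exp (zz * α i * L * φ i)) < 0 := by
  have hqpos : (0:ℕ) < q := lt_of_lt_of_le (by norm_num) hq
  have : NeZero q := ⟨hqpos.ne'⟩
  constructor
  · intro α φ hα0 hα1 hαm hφ hφγ
    have hγ : 0 < 1 - γ := by
      have h0 : (0:ℝ) ≤ α ⟨0, hqpos⟩ := hα0 _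
      have h1 : α ⟨0, hqpos⟩ ≤ αmax := hαm _
      nlinarith
    have hM : (⨆ i, α i) ≤ αmax := ciSup_le hαm
    have hs : 1 - γ ≤ ∑ i, α i * φ i := by
      calc 1 - γ = (1 - γ) * ∑ i, α i := by rw [hα1]; ring
        _ = ∑ i, (1 - γ) * α i := by rw [Finset.mul_sum]
        _ ≤ ∑ i, α i * φ i := Finset.sum_le_sum fun i _ => by
            have := hφγ i; nlinarith [hα0 i]
    constructor
    · simp
    · -- derivative computation
      have hval : (1 : ℝ) - (q:ℝ) + ∑ i, Real.exp ((0:ℝ) * α i * L * φ i) = 1 := by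
        simp
      have hder : HasDerivAt (fun zz : ℝ => zz * (⨆ i, α i) -
          (β / L) * Real.log (1 - (q:ℝ) + ∑ i, Real.exp (zz * α i * L * φ i)))
          (1 * (⨆ i, α i) - (β / L) * ((∑ i, Real.exp ((0:ℝ) * α i * L * φ i) *
            (α i * L * φ i)) / (1 - (q:ℝ) + ∑ i, Real.exp ((0:ℝ) * α i * L * φ i)))) 0 := by
        have hinner : HasDerivAt (fun zz : ℝ =>
            1 - (q:ℝ) + ∑ i, Real.exp (zz * α i * L * φ i))
            (∑ i, Real.exp ((0:ℝ) * α i * L * φ i) * (α i * L * φ i)) 0 := by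
          have hsum : HasDerivAt (fun zz : ℝ => ∑ i, Real.exp (zz * α i * L * φ i))
              (∑ i, Real.exp ((0:ℝ) * α i * L * φ i) * (α i * L * φ i)) 0 := by
            apply HasDerivAt.fun_sum
            intro i _
            have h1 : HasDerivAt (fun zz : ℝ => zz * α i * L * φ i) (α i * L * φ i) 0 := by
              simpa using (((hasDerivAt_id (0:ℝ)).mul_const (α i)).mul_const L).mul_const (φ i)
            exact h1.exp
          exact hsum.const_add (1 - (q:ℝ))
        have hlog : HasDerivAt (fun zz : ℝ =>
            Real.log (1 - (q:ℝ) + ∑ i, Real.exp (zz * α i * L * φ i)))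
            ((∑ i, Real.exp ((0:ℝ) * α i * L * φ i) * (α i * L * φ i)) /
              (1 - (q:ℝ) + ∑ i, Real.exp ((0:ℝ) * α i * L * φ i))) 0 := by
          exact hinner.log (by rw [hval]; norm_num)
        exact ((hasDerivAt_id (0:ℝ)).mul_const _).sub (hlog.const_mul (β / L))
      rw [hder.deriv]
      have hsimp : (∑ i, Real.exp ((0:ℝ) * α i * L * φ i) * (α i * L * φ i)) =
          L * ∑ i, α i * φ i := by
        rw [Finset.mul_sum]
        exact Finset.sum_congr rfl fun i _ => by simp; ring
      rw [hval, hsimp]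
      have hLne : L ≠ 0 := hL.ne'
      have heq2 : β / L * ((L * ∑ i, α i * φ i) / 1) = β * ∑ i, α i * φ i := by
        field_simp
      rw [heq2, one_mul]
      nlinarith
  · -- uniform z₀
    refine ⟨ε / (β * L * (1 - γ)^2 + 1), by positivity, ?_⟩
    intro α φ hα0 hα1 hαm hφ hφγ z hz hzlt
    have hγ : 0 < 1 - γ := by
      have h0 : (0:ℝ) ≤ α ⟨0, hqpos⟩ := hα0 _
      have h1 : α ⟨0, hqpos⟩ ≤ αmax := hαm _
      nlinarith
    have hM : (⨆ i, α i) ≤ αmax := ciSup_le hαm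
    have hs : 1 - γ ≤ ∑ i, α i * φ i := by
      calc 1 - γ = (1 - γ) * ∑ i, α i := by rw [hα1]; ring
        _ = ∑ i, (1 - γ) * α i := by rw [Finset.mul_sum]
        _ ≤ ∑ i, α i * φ i := Finset.sum_le_sum fun i _ => by
            have := hφγ i; nlinarith [hα0 i]
    set x : ℝ := z * L * (1 - γ) with hxdef
    have hx : 0 < x := by positivity
    set D : ℝ := 1 - (q:ℝ) + ∑ i, Real.exp (z * α i * L * φ i) with hDdef
    have hD1 : 1 + x ≤ D := by
      have hsum : (q:ℝ) + z * L * (∑ i, α i * φ i) ≤ ∑ i, Real.exp (z * α i * L * φ i) := by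
        have heach : ∀ i ∈ Finset.univ, z * α i * L * φ i + 1 ≤ Real.exp (z * α i * L * φ i) :=
          fun i _ => Real.add_one_le_exp _
        have := Finset.sum_le_sum heach
        have heq : ∑ i : Fin q, (z * α i * L * φ i + 1) =
            z * L * (∑ i, α i * φ i) + q := by
          rw [Finset.sum_add_distrib, Finset.sum_const, Finset.card_univ, Fintype.card_fin,
            Finset.mul_sum]
          congr 1
          · exact Finset.sum_congr rfl fun i _ => by ring
          · simp
        linarith [this, heq ▸ this]
      have : (q:ℝ) + x ≤ ∑ i, Real.exp (z * α i * L * φ i) := by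
        have : z * L * (1 - γ) ≤ z * L * (∑ i, α i * φ i) := by
          apply mul_le_mul_of_nonneg_left hs (by positivity)
        linarith
      simp only [hDdef]; linarith
    have hD0 : 0 < D := by nlinarith
    have hlogD : x - x^2 ≤ Real.log D := by
      have h1 : Real.log D⁻¹ ≤ D⁻¹ - 1 := Real.log_le_sub_one_of_pos (inv_pos.mpr hD0)
      rw [Real.log_inv] at h1
      have h2 : 1 - D⁻¹ ≤ Real.log D := by linarith
      have hx1 : (0:ℝ) < 1 + x := by positivity
      have h3 : D⁻¹ ≤ (1 + x)⁻¹ := by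
        apply inv_anti₀ hx1 hD1
      have h4 : (1 + x)⁻¹ ≤ 1 - x + x^2 := by
        have h5 : 1 ≤ (1 - x + x^2) * (1 + x) := by nlinarith [pow_nonneg hx.le 3]
        calc (1 + x)⁻¹ ≤ (1 + x)⁻¹ * ((1 - x + x^2) * (1 + x)) :=
              le_mul_of_one_le_right (by positivity) h5
          _ = 1 - x + x^2 := by field_simp
      linarith
    have hKz : z * (β * L * (1 - γ)^2 + 1) < ε := by
      rw [← lt_div_iff₀ (by positivity)]
      exact hzlt
    have hmain : z * (⨆ i, α i) - (β / L) * Real.log D < 0 := by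
      have hb : (β / L) * (x - x^2) ≤ (β / L) * Real.log D :=
        mul_le_mul_of_nonneg_left hlogD (by positivity)
      have hsup : z * (⨆ i, α i) ≤ z * αmax := mul_le_mul_of_nonneg_left hM hz.le
      have hexp : (β / L) * (x - x^2) =
          β * z * (1 - γ) - β * L * (1 - γ)^2 * z^2 := by
        rw [hxdef]; field_simp
      nlinarith
    exact hmain

end
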